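/- Let π ∈ S_n and D ⊆ [n−1] with ls_D(π) ≠ 0 and D ≠ ∅. Suppose 1 ∉ D, let m = min(D) − 1, and let k be the smallest index such that is(π_{[1,k]}) = m+1. Let D' = {i − m : i ∈ D}. Then ls_D(π) = m + ls_{D'}(π_{[k,n]}). -/

import Mathlib

open List Finset

variable {α : Type*}

/-- The (1-based) descent set of a finite sequence, as a `Finset ℕ`. -/
def desSet [LinearOrder α] [Inhabited α] (l : List α) : Finset ℕ :=
  (Finset.Icc 1 (l.length - 1)).filter (fun i => l.getD i default < l.getD (i - 1) default)

/-- The number of descents of a finite sequence. -/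
def desNum [LinearOrder α] [Inhabited α] (l : List α) : ℕ := (desSet l).card

/-- The number of ascents of a finite sequence. -/
def ascNum [LinearOrder α] [Inhabited α] (l : List α) : ℕ :=
  ((Finset.Icc 1 (l.length - 1)).filter (fun i => l.getD (i - 1) default < l.getD i default)).card

/-- `lsd w d` : the maximum length of a subsequence of `w` with exactly `d` descents
(`0` if there is none). -/
noncomputable def lsd [LinearOrder α] [Inhabited α] (w : List α) (d : ℕ) : ℕ :=
  sSup {m | ∃ s : List α, s.Sublist w ∧ desNum s = d ∧ s.length = m}

/-- `lsD w D` : the maximum length of a subsequence of `w` whose descent set is exactly `D`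
(`0` if there is none). -/
noncomputable def lsD [LinearOrder α] [Inhabited α] (w : List α) (D : Finset ℕ) : ℕ :=
  sSup {m | ∃ s : List α, s.Sublist w ∧ desSet s = D ∧ s.length = m}

/-- The length of a longest (strictly) increasing subsequence. -/
noncomputable def lis [LinearOrder α] (w : List α) : ℕ :=
  sSup {m | ∃ s : List α, s.Sublist w ∧ s.Pairwise (· < ·) ∧ s.length = m}

/-- The length of a longest (strictly) decreasing subsequence. -/
noncomputable def lds [LinearOrder α] (w : List α) : ℕ :=
  sSup {m | ∃ s : List α, s.Sublist w ∧ s.Pairwise (· > ·) ∧ s.length = m}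

/-- The one-line notation word of a permutation of `Fin n` (with values in `ℕ`). -/
def word {n : ℕ} (π : Equiv.Perm (Fin n)) : List ℕ := List.ofFn (fun i => (π i : ℕ))

/-- The factor `w_{[a, b]}` of a word `w` (positions `a` through `b`, 1-based). -/
def factor (w : List α) (a b : ℕ) : List α := (w.drop (a - 1)).take (b - a + 1)

lemma mem_desSet {l : List ℕ} {i : ℕ} :
    i ∈ desSet l ↔ (1 ≤ i ∧ i ≤ l.length - 1) ∧ l.getD i 0 < l.getD (i - 1) 0 := by
  simp [desSet, Finset.mem_filter, Finset.mem_Icc, and_assoc]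

lemma bddAbove_lsD (w : List ℕ) (D : Finset ℕ) :
    BddAbove {m | ∃ s : List ℕ, s.Sublist w ∧ desSet s = D ∧ s.length = m} := by
  refine ⟨w.length, ?_⟩
  rintro x ⟨s, hs, -, rfl⟩
  exact hs.length_le

lemma le_lsD {w s : List ℕ} {D : Finset ℕ} (hs : s.Sublist w) (hD : desSet s = D) :
    s.length ≤ lsD w D :=
  le_csSup (bddAbove_lsD w D) ⟨s, hs, hD, rfl⟩

lemma lsD_exists {w : List ℕ} {D : Finset ℕ} (h : lsD w D ≠ 0) :
    ∃ s : List ℕ, s.Sublist w ∧ desSet s = D ∧ s.length = lsD w D := by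
  have hne : {m | ∃ s : List ℕ, s.Sublist w ∧ desSet s = D ∧ s.length = m}.Nonempty := by
    by_contra hemp
    rw [Set.not_nonempty_iff_eq_empty] at hemp
    apply h
    simp only [lsD, hemp, csSup_empty, Nat.bot_eq_zero]
  exact Nat.sSup_mem hne (bddAbove_lsD w D)

lemma bddAbove_lis (w : List ℕ) :
    BddAbove {m | ∃ s : List ℕ, s.Sublist w ∧ s.Pairwise (· < ·) ∧ s.length = m} := by
  refine ⟨w.length, ?_⟩
  rintro x ⟨s, hs, -, rfl⟩
  exact hs.length_le

lemma lis_nonempty (w : List ℕ) :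
    {m | ∃ s : List ℕ, s.Sublist w ∧ s.Pairwise (· < ·) ∧ s.length = m}.Nonempty :=
  ⟨0, [], List.nil_sublist w, List.Pairwise.nil, rfl⟩

lemma le_lis {w s : List ℕ} (hs : s.Sublist w) (hsort : s.Pairwise (· < ·)) :
    s.length ≤ lis w :=
  le_csSup (bddAbove_lis w) ⟨s, hs, hsort, rfl⟩

lemma lis_exists (w : List ℕ) :
    ∃ s : List ℕ, s.Sublist w ∧ s.Pairwise (· < ·) ∧ s.length = lis w :=
  Nat.sSup_mem (lis_nonempty w) (bddAbove_lis w)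

lemma lis_le_length (w : List ℕ) : lis w ≤ w.length := by
  apply csSup_le (lis_nonempty w)
  rintro x ⟨s, hs, -, rfl⟩
  exact hs.length_le

lemma lis_mono {w w' : List ℕ} (h : w.Sublist w') : lis w ≤ lis w' := by
  apply csSup_le (lis_nonempty w)
  rintro x ⟨s, hs, hsort, rfl⟩
  exact le_lis (hs.trans h) hsort

lemma lis_concat_le (w : List ℕ) (a : ℕ) : lis (w ++ [a]) ≤ lis w + 1 := by
  apply csSup_le (lis_nonempty _)
  rintro x ⟨s, hs, hsort, rfl⟩
  rw [List.sublist_append_iff] at hs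
  obtain ⟨s₁, s₂, rfl, h₁, h₂⟩ := hs
  have hlen₂ : s₂.length ≤ 1 := by simpa using h₂.length_le
  have hsort₁ : s₁.Pairwise (· < ·) := hsort.sublist (List.sublist_append_left _ _)
  have := le_lis h₁ hsort₁
  simp only [List.length_append]
  omega
lemma lis_nil : lis ([] : List ℕ) = 0 := by
  apply _root_.le_antisymm (by simpa using lis_le_length ([] : List ℕ)) (Nat.zero_le _)

lemma exists_take_lis (w : List ℕ) (c : ℕ) :
    ∀ j : ℕ, c ≤ lis (w.take j) → ∃ j' ≤ j, lis (w.take j') = c := by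
  intro j
  induction j with
  | zero =>
    intro h
    simp only [List.take_zero, lis_nil] at h
    exact ⟨0, le_refl _, by simp [lis_nil]; omega⟩
  | succ j ih =>
    intro h
    by_cases hc : c ≤ lis (w.take j)
    · obtain ⟨j', hj', hlis⟩ := ih hc
      exact ⟨j', hj'.trans (Nat.le_succ j), hlis⟩
    · push_neg at hc
      by_cases hj : j < w.length
      · have hts : w.take (j+1) = w.take j ++ [w[j]] := by
          rw [List.take_succ]
          congr
          simp [List.getElem?_eq_getElem hj]
        have : lis (w.take (j+1)) ≤ lis (w.take j) + 1 := by
          rw [hts]; exact lis_concat_le _ _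
        exact ⟨j+1, le_refl _, by omega⟩
      · push_neg at hj
        have : w.take (j+1) = w.take j := by
          rw [List.take_of_length_le hj, List.take_of_length_le (hj.trans (Nat.le_succ j))]
        rw [this] at h
        omega

lemma desSet_drop (s : List ℕ) (m i : ℕ) (hi : 1 ≤ i) :
    i ∈ desSet (s.drop m) ↔ i + m ∈ desSet s := by
  rw [mem_desSet, mem_desSet]
  constructor
  · rintro ⟨⟨-, h2⟩, h3⟩
    have hlen : (s.drop m).length = s.length - m := List.length_drop
    have hb : i + m ≤ s.length - 1 := by omega
    have hb1 : i + m < s.length := by omega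
    have hb2 : i + m - 1 < s.length := by omega
    have hd1 : i < (s.drop m).length := by omega
    have hd2 : i - 1 < (s.drop m).length := by omega
    refine ⟨⟨by omega, hb⟩, ?_⟩
    rw [List.getD_eq_getElem _ _ hd1, List.getD_eq_getElem _ _ hd2,
        List.getElem_drop, List.getElem_drop,
        List.getD_eq_getElem _ _ hb1, List.getD_eq_getElem _ _ hb2] at *
    convert h3 using 2 <;> omega
  · rintro ⟨⟨-, h2⟩, h3⟩
    have hlen : (s.drop m).length = s.length - m := List.length_drop
    have hb1 : i + m < s.length := by omega
    have hb2 : i + m - 1 < s.length := by omega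
    have hd1 : i < (s.drop m).length := by omega
    have hd2 : i - 1 < (s.drop m).length := by omega
    refine ⟨⟨hi, by omega⟩, ?_⟩
    rw [List.getD_eq_getElem _ _ hd1, List.getD_eq_getElem _ _ hd2,
        List.getElem_drop, List.getElem_drop]
    rw [List.getD_eq_getElem _ _ hb1, List.getD_eq_getElem _ _ hb2] at h3
    convert h3 using 2 <;> omega
lemma desSet_append (u t : List ℕ) (ht : t ≠ []) (hu : u.Pairwise (· < ·))
    (hut : ∀ x ∈ u, x < t.getD 0 0) :
    desSet (u ++ t) = (desSet t).image (· + u.length) := by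
  have htl : 1 ≤ t.length := List.length_pos_iff.mpr ht
  ext i
  rw [mem_desSet, Finset.mem_image]
  simp only [mem_desSet, List.length_append]
  constructor
  · rintro ⟨⟨h1, h2⟩, h3⟩
    rcases lt_trichotomy i u.length with hiu | hiu | hiu
    · exfalso
      rw [List.getD_append _ _ _ _ hiu, List.getD_append _ _ _ _ (by omega)] at h3
      rw [List.getD_eq_getElem _ _ hiu, List.getD_eq_getElem _ _ (show i - 1 < u.length by omega)] at h3
      have := List.pairwise_iff_get.mp hu ⟨i - 1, by omega⟩ ⟨i, hiu⟩ (by simp; omega)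
      simp only [List.get_eq_getElem] at this
      omega
    · exfalso
      subst hiu
      rw [List.getD_append_right _ _ _ _ (le_refl _), Nat.sub_self,
          List.getD_append _ _ _ _ (show u.length - 1 < u.length by omega)] at h3
      have hmem : u.getD (u.length - 1) 0 ∈ u := by
        rw [List.getD_eq_getElem _ _ (show u.length - 1 < u.length by omega)]
        exact List.getElem_mem _
      exact absurd h3 (not_lt.mpr (le_of_lt (hut _ hmem)))
    · refine ⟨i - u.length, ⟨⟨by omega, by omega⟩, ?_⟩, by omega⟩
      rw [List.getD_append_right _ _ _ _ (by omega : u.length ≤ i),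
          List.getD_append_right _ _ _ _ (by omega : u.length ≤ i - 1)] at h3
      convert h3 using 2 <;> omega
  · rintro ⟨j, ⟨⟨hj1, hj2⟩, hj3⟩, rfl⟩
    refine ⟨⟨by omega, by omega⟩, ?_⟩
    rw [List.getD_append_right _ _ _ _ (by omega : u.length ≤ j + u.length),
        List.getD_append_right _ _ _ _ (by omega : u.length ≤ j + u.length - 1)]
    convert hj3 using 2 <;> omega

lemma desSet_replace_head (a a' b : ℕ) (r : List ℕ) (h : b < a) (h' : b < a') :
    desSet (a' :: b :: r) = desSet (a :: b :: r) := by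
  ext i
  rw [mem_desSet, mem_desSet]
  simp only [List.length_cons]
  match i with
  | 0 => simp
  | 1 =>
    simp only [List.getD_cons_succ, List.getD_cons_zero, show (1:ℕ) - 1 = 0 from rfl]
    constructor
    · rintro ⟨h1, -⟩; exact ⟨h1, h⟩
    · rintro ⟨h1, -⟩; exact ⟨h1, h'⟩
  | (j+2) =>
    have e1 : ∀ x : ℕ, (x :: b :: r).getD (j+2) 0 = r.getD j 0 := by
      intro x; simp [List.getD_cons_succ]
    have e2 : ∀ x : ℕ, (x :: b :: r).getD (j+2-1) 0 = (b :: r).getD j 0 := by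
      intro x; rw [show j+2-1 = j+1 from rfl, List.getD_cons_succ]
    rw [e1, e2, e1, e2]

lemma sorted_take_of_no_desc (s : List ℕ) (hnd : s.Nodup) (m : ℕ) (hlen : m + 1 ≤ s.length)
    (h : ∀ i, 1 ≤ i → i ≤ m → i ∉ desSet s) : (s.take (m+1)).Pairwise (· < ·) := by
  have hchain : (s.take (m+1)).IsChain (· < ·) := by
    rw [List.isChain_iff_getElem]
    intro i hi
    have hlt : (s.take (m+1)).length = m + 1 := by
      rw [List.length_take]; omega
    rw [hlt] at hi
    simp only [List.get_eq_getElem, List.getElem_take]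
    have hii : i + 1 < s.length := by omega
    have hnotdes := h (i+1) (by omega) (by omega)
    rw [mem_desSet] at hnotdes
    push_neg at hnotdes
    have hb := hnotdes ⟨by omega, by omega⟩
    rw [List.getD_eq_getElem _ _ hii,
        List.getD_eq_getElem _ _ (show i + 1 - 1 < s.length by omega)] at hb
    have hne : s[i] ≠ s[i+1] := by
      intro heq
      have := List.nodup_iff_injective_get.mp hnd
        (show s.get ⟨i, by omega⟩ = s.get ⟨i+1, hii⟩ by simpa using heq)
      simp at this
    simp only [show i + 1 - 1 = i by omega] at hb
    omega
  exact List.isChain_iff_pairwise.mp hchain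

lemma sublist_concat_decomp {s l : List ℕ} {a : ℕ} (h : s.Sublist (l ++ [a])) :
    s.Sublist l ∨ ∃ s', s = s' ++ [a] ∧ s'.Sublist l := by
  rw [List.sublist_append_iff] at h
  obtain ⟨s₁, s₂, rfl, h₁, h₂⟩ := h
  rcases List.sublist_singleton.mp h₂ with rfl | rfl
  · left; simpa using h₁
  · right; exact ⟨s₁, rfl, h₁⟩
lemma construct_ge (w : List ℕ) (k m wk : ℕ) (v' u : List ℕ) (D D' : Finset ℕ)
    (hm1 : 1 ≤ m)
    (hv'_sub : v'.Sublist (w.take (k-1))) (hv'_len : v'.length = m)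
    (hv'_sorted : v'.Pairwise (· < ·)) (hv'_lt : ∀ x ∈ v', x < wk)
    (hdk : w.drop (k-1) = wk :: w.drop k)
    (hv_sub : (v' ++ [wk]).Sublist (w.take k))
    (hu_sub2 : u.Sublist (w.drop (k-1))) (hu_des : desSet u = D')
    (hu1 : 1 ∈ desSet u)
    (himage : D'.image (· + m) = D) :
    ∃ s2 : List ℕ, s2.Sublist w ∧ desSet s2 = D ∧ s2.length = m + u.length := by
  have hu_ge2 : 2 ≤ u.length := by have := (mem_desSet.mp hu1).1.2; omega
  obtain ⟨a, b, r₂', hu_eq⟩ : ∃ a b r₂', u = a :: b :: r₂' := by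
    rcases u with - | ⟨a, - | ⟨b, r₂'⟩⟩
    · simp at hu_ge2
    · simp at hu_ge2
    · exact ⟨a, b, r₂', rfl⟩
  have hba : b < a := by
    have := (mem_desSet.mp hu1).2
    rw [hu_eq] at this
    simpa using this
  have hw_split : w.take (k-1) ++ w.drop (k-1) = w := List.take_append_drop _ _
  by_cases hawk : a = wk
  · -- head of u is exactly w_k : prepend v'
    refine ⟨v' ++ u, ?_, ?_, by simp [hv'_len]⟩
    · rw [← hw_split]
      exact List.Sublist.append hv'_sub hu_sub2
    · rw [desSet_append v' u (by rw [hu_eq]; simp) hv'_sorted ?junction, hv'_len, hu_des,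
        himage]
      case junction =>
        intro x hx
        rw [hu_eq, hawk]
        simpa using hv'_lt x hx
  · -- head of u is not w_k, so u lives strictly after position k
    have hu_sub3 : u.Sublist (w.drop k) := by
      rw [hu_eq, hdk] at hu_sub2
      cases hu_sub2 with
      | cons _ h => rw [hu_eq]; exact h
      | cons_cons _ h => exact absurd rfl hawk
    rcases lt_or_gt_of_ne hawk with hlt | hgt
    · -- a < wk : replace the head of u by wk
      refine ⟨v' ++ (wk :: b :: r₂'), ?_, ?_, by simp [hv'_len, hu_eq]⟩
      · rw [← hw_split]
        refine List.Sublist.append hv'_sub ?_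
        rw [hdk]
        refine List.Sublist.cons₂ _ ?_
        have : (b :: r₂').Sublist u := by rw [hu_eq]; exact List.tail_sublist (a :: b :: r₂')
        exact this.trans hu_sub3
      · rw [desSet_append v' _ (by simp) hv'_sorted ?junction2, hv'_len,
          desSet_replace_head a wk b r₂' hba (by omega), ← hu_eq, hu_des, himage]
        case junction2 =>
          intro x hx
          simpa using hv'_lt x hx
    · -- wk < a : use the top m elements of v as the increasing prefix
      have hv'_ne : v' ≠ [] := by
        intro h
        rw [h] at hv'_len
        simp at hv'_len
        omega
      refine ⟨(v'.tail ++ [wk]) ++ u, ?_, ?_, ?_⟩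
      · rw [← List.take_append_drop k w]
        refine List.Sublist.append ?_ hu_sub3
        have h1'' : (v'.tail ++ [wk]).Sublist (v' ++ [wk]) :=
          List.Sublist.append (List.tail_sublist _) (List.Sublist.refl _)
        exact h1''.trans hv_sub
      · have hsorted2 : (v'.tail ++ [wk]).Pairwise (· < ·) := by
          rw [List.pairwise_append]
          refine ⟨hv'_sorted.sublist (List.tail_sublist _), by simp, ?_⟩
          intro x hx y hy
          simp at hy
          subst hy
          exact hv'_lt x ((List.tail_sublist v').mem hx)
        rw [desSet_append _ u (by rw [hu_eq]; simp) hsorted2 ?junction3]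
        · have hlen3 : (v'.tail ++ [wk]).length = m := by
            rw [List.length_append, List.length_tail, hv'_len]
            simp
            omega
          rw [hlen3, hu_des, himage]
        case junction3 =>
          intro x hx
          rw [hu_eq]
          simp only [List.getD_cons_zero]
          rcases List.mem_append.mp hx with hx' | hx'
          · exact lt_trans (hv'_lt x ((List.tail_sublist v').mem hx')) hgt
          · simp at hx'
            omega
      · rw [List.length_append, List.length_append, List.length_tail, hv'_len]
        simp
        omega
theorem stmt16 (n : ℕ) (π : Equiv.Perm (Fin n)) (D : Finset ℕ)
    (hDsub : D ⊆ Finset.Icc 1 (n - 1)) (hDne : D.Nonempty) (h0 : lsD (word π) D ≠ 0)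
    (h1 : 1 ∉ D) (m : ℕ) (hm : m + 1 = D.min' hDne)
    (k : ℕ) (hk : lis (factor (word π) 1 k) = m + 1)
    (hkmin : ∀ k' : ℕ, lis (factor (word π) 1 k') = m + 1 → k ≤ k') :
    lsD (word π) D = m + lsD (factor (word π) k n) (D.image (fun i => i - m)) := by
  set w : List ℕ := word π with hw
  set D' : Finset ℕ := D.image (fun i => i - m) with hD'
  have hw_len : w.length = n := List.length_ofFn
  have hw_nd : w.Nodup := by
    rw [hw, word, List.nodup_ofFn]
    intro i j hij
    exact π.injective (Fin.val_injective hij)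
  -- basic facts about D and m
  have hmD : m + 1 ∈ D := by rw [hm]; exact D.min'_mem hDne
  have hDge : ∀ d ∈ D, m + 1 ≤ d := by intro d hd; rw [hm]; exact D.min'_le d hd
  have hm1 : 1 ≤ m := by
    rcases Nat.eq_zero_or_pos m with rfl | h
    · exact absurd hmD h1
    · exact h
  have hn2 : m + 2 ≤ n := by
    have := hDsub hmD
    rw [Finset.mem_Icc] at this
    omega
  have hfac1 : ∀ j : ℕ, 1 ≤ j → factor w 1 j = w.take j := by
    intro j hj
    simp only [factor, Nat.sub_self, List.drop_zero]
    congr 1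
    omega
  -- k is between 2 and n
  have hk2 : 2 ≤ k := by
    by_contra hlt
    push_neg at hlt
    have hfk : factor w 1 k = w.take 1 := by
      interval_cases k
      · simp [factor]
      · exact hfac1 1 le_rfl
    rw [hfk] at hk
    have h2 := lis_le_length (w.take 1)
    rw [List.length_take] at h2
    omega
  have hk' : lis (w.take k) = m + 1 := by rw [← hfac1 k (by omega)]; exact hk
  have hkn : k ≤ n := by
    by_contra hgt
    push_neg at hgt
    have : w.take k = w.take n := by
      rw [List.take_of_length_le (by omega), List.take_of_length_le (by omega)]
    have := hkmin n (by rw [hfac1 n (by omega), ← this, hk'])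
    omega
  -- the last letter of w.take k
  obtain ⟨wk, hwk⟩ : ∃ x : ℕ, x = w.getD (k - 1) 0 := ⟨_, rfl⟩
  have hk1n : k - 1 < w.length := by omega
  have hwk' : wk = w[k-1]'hk1n := by rw [hwk]; exact List.getD_eq_getElem _ _ hk1n
  have htk : w.take k = w.take (k-1) ++ [wk] := by
    rw [hwk']
    conv_lhs => rw [show k = (k-1)+1 by omega]
    rw [List.take_succ, List.getElem?_eq_getElem hk1n]
    rfl
  have hdk : w.drop (k-1) = wk :: w.drop k := by
    rw [hwk', List.drop_eq_getElem_cons hk1n, show k - 1 + 1 = k by omega]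
  have hfac : factor w k n = w.drop (k-1) := by
    rw [factor, List.take_of_length_le]
    rw [List.length_drop]
    omega
  -- lis of w.take (k-1) is m
  have htk_sub : (w.take (k-1)).Sublist (w.take k) := by
    rw [htk]; exact List.sublist_append_left _ _
  have hlis_k1 : lis (w.take (k-1)) = m := by
    have hub : lis (w.take (k-1)) ≤ m := by
      by_contra hc
      push_neg at hc
      have hle : lis (w.take (k-1)) ≤ m + 1 := hk' ▸ lis_mono htk_sub
      have := hkmin (k-1) (by rw [hfac1 (k-1) (by omega)]; omega)
      omega
    have hlb : m + 1 ≤ lis (w.take (k-1)) + 1 := by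
      rw [← hk', htk]
      exact lis_concat_le _ _
    omega
  -- extract an increasing sequence v' ++ [wk] of length m+1 in w.take k
  obtain ⟨v, hv_sub, hv_sorted, hv_len⟩ := lis_exists (w.take k)
  rw [hk'] at hv_len
  have hv_dec : ∃ v', v = v' ++ [wk] ∧ v'.Sublist (w.take (k-1)) := by
    rw [htk] at hv_sub
    rcases sublist_concat_decomp hv_sub with hv | ⟨v', hv1, hv2⟩
    · exact absurd (le_lis hv hv_sorted) (by rw [hlis_k1, hv_len]; omega)
    · exact ⟨v', hv1, hv2⟩
  obtain ⟨v', hv_eq, hv'_sub⟩ := hv_dec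
  have hv'_len : v'.length = m := by
    have := hv_len
    rw [hv_eq, List.length_append] at this
    simpa using this
  have hv'_sorted : v'.Pairwise (· < ·) :=
    (by rw [hv_eq] at hv_sorted; exact hv_sorted.sublist (List.sublist_append_left _ _))
  have hv'_lt : ∀ x ∈ v', x < wk := by
    rw [hv_eq] at hv_sorted
    intro x hx
    exact (List.pairwise_append.mp hv_sorted).2.2 x hx wk (by simp)
  -- facts about D'
  have hD'1 : 1 ∈ D' := by
    rw [hD', Finset.mem_image]
    exact ⟨m + 1, hmD, by omega⟩
  have himage : D'.image (· + m) = D := by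
    ext d
    rw [Finset.mem_image]
    constructor
    · rintro ⟨j, hj, rfl⟩
      rw [hD', Finset.mem_image] at hj
      obtain ⟨d', hd', rfl⟩ := hj
      have := hDge d' hd'
      rwa [show d' - m + m = d' by omega]
    · intro hd
      refine ⟨d - m, ?_, by have := hDge d hd; omega⟩
      rw [hD', Finset.mem_image]
      exact ⟨d, hd, rfl⟩
  -- ≤ direction: decompose an optimal subsequence
  obtain ⟨s, hs_sub, hs_des, hs_len⟩ := lsD_exists h0
  have hmem : m + 1 ∈ desSet s := by rw [hs_des]; exact hmD
  have hslen : m + 2 ≤ s.length := by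
    have := (mem_desSet.mp hmem).1.2
    omega
  have hs_nd : s.Nodup := hs_sub.nodup hw_nd
  have hsorted : (s.take (m+1)).Pairwise (· < ·) := by
    refine sorted_take_of_no_desc s hs_nd m (by omega) ?_
    intro i hi1 him hmem'
    rw [hs_des] at hmem'
    have := hDge i hmem'
    omega
  set t : List ℕ := s.drop m with ht_def
  have ht_len : t.length = s.length - m := List.length_drop
  have ht_des : desSet t = D' := by
    ext i
    constructor
    · intro hi
      have hi1 : 1 ≤ i := (mem_desSet.mp hi).1.1
      have := (desSet_drop s m i hi1).mp hi
      rw [hs_des] at this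
      rw [hD', Finset.mem_image]
      exact ⟨i + m, this, by omega⟩
    · intro hi
      rw [hD', Finset.mem_image] at hi
      obtain ⟨d, hd, rfl⟩ := hi
      have hd1 := hDge d hd
      apply (desSet_drop s m (d - m) (by omega)).mpr
      rw [hs_des, show d - m + m = d by omega]
      exact hd
  have hu_len : (s.take m).length = m := by rw [List.length_take]; omega
  obtain ⟨t1, r, ht_eq⟩ : ∃ t1 r, t = t1 :: r := by
    rcases t with - | ⟨t1, r⟩
    · exfalso; simp at ht_len; omega
    · exact ⟨t1, r, rfl⟩
  have hs_split : s = s.take m ++ t1 :: r := by rw [← ht_eq, ht_def, List.take_append_drop]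
  have hs_sub' := hs_sub
  rw [hs_split, List.append_sublist_iff] at hs_sub'
  obtain ⟨r₁, r₂, hw_eq, hu_sub, htr_sub⟩ := hs_sub'
  rw [List.cons_sublist_iff] at htr_sub
  obtain ⟨y₁, y₂, hr₂_eq, ht1_mem, hr_sub⟩ := htr_sub
  obtain ⟨p, q, hy₁_eq⟩ := List.append_of_mem ht1_mem
  have hw_eq2 : w = (r₁ ++ p) ++ t1 :: (q ++ y₂) := by
    rw [hw_eq, hr₂_eq, hy₁_eq]; simp
  -- the prefix of s of length m+1 is an increasing subsequence ending at position |r₁++p|+1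
  have htku : s.take (m+1) = s.take m ++ [t1] := by
    conv_lhs => rw [hs_split]
    rw [show m + 1 = (s.take m).length + 1 by omega, List.take_append]
    simp
  have hpref : w.take ((r₁ ++ p).length + 1) = (r₁ ++ p) ++ [t1] := by
    conv_lhs => rw [hw_eq2]
    rw [List.take_append, List.take_of_length_le (show (r₁ ++ p).length ≤ (r₁ ++ p).length + 1 by omega)]
    simp
  have hlis_ge : m + 1 ≤ lis (w.take ((r₁ ++ p).length + 1)) := by
    rw [hpref]
    have hsub2 : (s.take m ++ [t1]).Sublist ((r₁ ++ p) ++ [t1]) :=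
      List.Sublist.append (hu_sub.trans (List.sublist_append_left _ _)) (List.Sublist.refl _)
    have := le_lis hsub2 (htku ▸ hsorted)
    simpa [hu_len] using this
  obtain ⟨j', hj'le, hj'⟩ := exists_take_lis w (m+1) ((r₁ ++ p).length + 1) hlis_ge
  have hj'1 : 1 ≤ j' := by
    by_contra hc
    push_neg at hc
    interval_cases j'
    simp only [List.take_zero, lis_nil] at hj'
    omega
  have hkle : k ≤ (r₁ ++ p).length + 1 :=
    (hkmin j' (by rw [hfac1 j' hj'1]; exact hj')).trans hj'le
  have ht_sub : t.Sublist (w.drop (k-1)) := by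
    rw [hw_eq2, List.drop_append_of_le_length (by simp at hkle ⊢; omega), ht_eq]
    refine List.Sublist.trans ?_ (List.sublist_append_right _ _)
    exact List.Sublist.cons₂ _ (hr_sub.trans (List.sublist_append_right _ _))
  have ht_sub2 : t.Sublist (factor w k n) := by rw [hfac]; exact ht_sub
  have hle1 : lsD w D ≤ m + lsD (factor w k n) D' := by
    have := le_lsD ht_sub2 ht_des
    omega
  -- ≥ direction
  have hR0 : lsD (factor w k n) D' ≠ 0 := by
    have hge := le_lsD ht_sub2 ht_des
    have h1' : 1 ∈ desSet t := by rw [ht_des]; exact hD'1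
    have := (mem_desSet.mp h1').1.2
    omega
  obtain ⟨u, hu_sub2, hu_des, hu_len2⟩ := lsD_exists hR0
  rw [hfac] at hu_sub2
  have hu1 : 1 ∈ desSet u := by rw [hu_des]; exact hD'1
  have hgoal := construct_ge w k m wk v' u D D' hm1 hv'_sub hv'_len hv'_sorted hv'_lt hdk
    (hv_eq ▸ hv_sub) hu_sub2 hu_des hu1 himage
  obtain ⟨s2, hs2_sub, hs2_des, hs2_len⟩ := hgoal
  have hge1 := le_lsD hs2_sub hs2_des
  rw [hs2_len, hu_len2] at hge1
  exact le_antisymm hle1 hge1
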